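/- For every finite connected simple graph G with at least 2 vertices, the least restricted doubling constant C_G^0 = inf_μ sup_{v ∈ V_G} μ(B(v,1))/μ(v), over all positive weight functions μ, equals 1 + r(A_G), where r(A_G) is the spectral radius of the adjacency matrix of G. -/

import Mathlib

open Matrix Finset

/-- for a finite connected graph on at least two vertices, the least
restricted doubling constant `C_G^0 = inf_μ sup_v μ(B(v,1))/μ(v)` equals
`1 + r(A_G)`, the spectral radius (largest eigenvalue) of the adjacency matrix. -/
theorem stmt_2 {V : Type*} [Fintype V] [DecidableEq V] (G : SimpleGraph V)
    [DecidableRel G.Adj] (hG : G.Connected) (hcard : 2 ≤ Fintype.card V) :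
    (⨅ μ : {f : V → ℝ // ∀ v, 0 < f v},
        ⨆ v : V, (μ.1 v + ∑ w ∈ G.neighborFinset v, μ.1 w) / μ.1 v) =
      1 + sSup (spectrum ℝ (G.adjMatrix ℝ)) := by
  classical
  haveI hne : Nonempty V := Fintype.card_pos_iff.mp (by omega)
  set A : Matrix V V ℝ := G.adjMatrix ℝ with hAdef
  have hA : A.IsHermitian := by
    show Aᴴ = A
    ext i j
    simp [hAdef, Matrix.conjTranspose_apply, G.adj_comm i j]
  obtain ⟨i0, -, hi0⟩ := Finset.exists_max_image (Finset.univ : Finset V) hA.eigenvalues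
    ⟨Classical.arbitrary V, Finset.mem_univ _⟩
  set lm : ℝ := hA.eigenvalues i0 with hlmdef
  have hlm : ∀ i, hA.eigenvalues i ≤ lm := fun i => hi0 i (Finset.mem_univ i)
  -- the matrix lm • 1 - A is positive semidefinite
  set M : Matrix V V ℝ := lm • (1 : Matrix V V ℝ) - A with hMdef
  set U : Matrix V V ℝ := (hA.eigenvectorUnitary : Matrix V V ℝ) with hUdef
  have hU1 : U * Uᴴ = 1 := by
    have := Matrix.mem_unitaryGroup_iff.mp hA.eigenvectorUnitary.2
    simpa [hUdef, Matrix.star_eq_conjTranspose] using this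
  have hMeq : M = U * Matrix.diagonal (fun i => lm - hA.eigenvalues i) * Uᴴ := by
    have hd : Matrix.diagonal (fun i => lm - hA.eigenvalues i)
        = lm • (1 : Matrix V V ℝ) - Matrix.diagonal (RCLike.ofReal ∘ hA.eigenvalues) := by
      rw [RCLike.ofReal_real_eq_id]
      ext i j
      by_cases h : i = j <;> simp [h, Matrix.diagonal_apply, Matrix.one_apply]
    rw [hd, Matrix.mul_sub, Matrix.sub_mul]
    have hspec : U * Matrix.diagonal (RCLike.ofReal ∘ hA.eigenvalues) * Uᴴ = A := by
      conv_rhs => rw [hA.spectral_theorem]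
      rw [Unitary.conjStarAlgAut_apply, Matrix.star_eq_conjTranspose]
    rw [hspec, hMdef]
    congr 1
    rw [Matrix.mul_smul, Matrix.mul_one, Matrix.smul_mul, hU1]
  have hMpsd : M.PosSemidef := by
    rw [hMeq]
    exact (Matrix.posSemidef_diagonal_iff.mpr fun i => sub_nonneg.mpr (hlm i)).mul_mul_conjTranspose_same U
  have hstar : ∀ x : V → ℝ, star x = x := fun x => funext fun v => star_trivial _
  -- Rayleigh bound
  have hray : ∀ x : V → ℝ, x ⬝ᵥ (A *ᵥ x) ≤ lm * (x ⬝ᵥ x) := by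
    intro x
    have h := hMpsd.dotProduct_mulVec_nonneg x
    rw [hstar] at h
    simp only [hMdef, Matrix.sub_mulVec, Matrix.smul_mulVec, Matrix.one_mulVec,
      dotProduct_sub, dotProduct_smul, smul_eq_mul] at h
    linarith
  -- equality case
  have heq0 : ∀ x : V → ℝ, x ⬝ᵥ (M *ᵥ x) = 0 → A *ᵥ x = lm • x := by
    intro x hx
    have h := (hMpsd.dotProduct_mulVec_zero_iff x).mp (by rw [hstar]; exact hx)
    have : lm • x - A *ᵥ x = 0 := by
      simpa [hMdef, Matrix.sub_mulVec, Matrix.smul_mulVec, Matrix.one_mulVec] using h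
    linear_combination (norm := module) -this
  -- eigenvector for lm
  set x0 : V → ℝ := ⇑(hA.eigenvectorBasis i0) with hx0def
  have hx0A : A *ᵥ x0 = lm • x0 := hA.mulVec_eigenvectorBasis i0
  have hx0ne : ∃ v, x0 v ≠ 0 := by
    by_contra h
    push_neg at h
    have h0 : hA.eigenvectorBasis i0 = 0 := by
      apply PiLp.ext
      intro v
      exact h v
    have := hA.eigenvectorBasis.toBasis.ne_zero i0
    rw [OrthonormalBasis.coe_toBasis] at this
    exact this h0
  set y : V → ℝ := fun v => |x0 v| with hydef
  have hynn : ∀ v, 0 ≤ y v := fun v => abs_nonneg _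
  have hyy : y ⬝ᵥ y = x0 ⬝ᵥ x0 :=
    Finset.sum_congr rfl fun v _ => abs_mul_abs_self _
  have hAnn : ∀ v w, 0 ≤ A v w := by
    intro v w
    simp only [hAdef, SimpleGraph.adjMatrix_apply]
    split <;> norm_num
  have hcomp : x0 ⬝ᵥ (A *ᵥ x0) ≤ y ⬝ᵥ (A *ᵥ y) := by
    refine Finset.sum_le_sum fun v _ => ?_
    have habs : |(A *ᵥ x0) v| ≤ (A *ᵥ y) v := by
      refine (Finset.abs_sum_le_sum_abs _ _).trans ?_
      refine Finset.sum_le_sum fun w _ => ?_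
      rw [abs_mul, abs_of_nonneg (hAnn v w)]
    calc x0 v * (A *ᵥ x0) v ≤ |x0 v * (A *ᵥ x0) v| := le_abs_self _
      _ = y v * |(A *ᵥ x0) v| := abs_mul _ _
      _ ≤ y v * (A *ᵥ y) v := mul_le_mul_of_nonneg_left habs (hynn v)
  have hxAx : x0 ⬝ᵥ (A *ᵥ x0) = lm * (x0 ⬝ᵥ x0) := by
    rw [hx0A, dotProduct_smul, smul_eq_mul]
  have hAy : A *ᵥ y = lm • y := by
    apply heq0
    have h1 : y ⬝ᵥ (M *ᵥ y) = lm * (y ⬝ᵥ y) - y ⬝ᵥ (A *ᵥ y) := by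
      simp only [hMdef, Matrix.sub_mulVec, Matrix.smul_mulVec, Matrix.one_mulVec,
        dotProduct_sub, dotProduct_smul, smul_eq_mul]
    have h2 : 0 ≤ y ⬝ᵥ (M *ᵥ y) := by
      have := hMpsd.dotProduct_mulVec_nonneg y
      rwa [hstar] at this
    have h3 : y ⬝ᵥ (A *ᵥ y) ≤ lm * (y ⬝ᵥ y) := hray y
    have h4 : lm * (y ⬝ᵥ y) ≤ y ⬝ᵥ (A *ᵥ y) := by
      rw [hyy, ← hxAx]; exact hcomp
    linarith
  -- positivity of y by connectivity
  have hstep : ∀ v, y v = 0 → ∀ w, G.Adj v w → y w = 0 := by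
    intro v hv w hw
    have h0 : (A *ᵥ y) v = 0 := by rw [hAy]; simp [hv]
    rw [hAdef, SimpleGraph.adjMatrix_mulVec_apply] at h0
    exact (Finset.sum_eq_zero_iff_of_nonneg fun u _ => hynn u).mp h0 w
      ((SimpleGraph.mem_neighborFinset G v w).mpr hw)
  have hzero_all : ∀ v w (p : G.Walk v w), y v = 0 → y w = 0 := by
    intro v w p
    induction p with
    | nil => exact id
    | cons h q ih => intro hv; exact ih (hstep _ hv _ h)
  have hypos : ∀ v, 0 < y v := by
    intro v
    rcases (hynn v).lt_or_eq with h | h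
    · exact h
    · exfalso
      obtain ⟨w, hw⟩ := hx0ne
      obtain ⟨p⟩ := hG.preconnected v w
      exact hw (abs_eq_zero.mp (hzero_all v w p h.symm))
  -- sSup of the spectrum equals lm
  have hub : ∀ μ ∈ spectrum ℝ A, μ ≤ lm := by
    intro μ hμ
    have hμ' : μ ∈ spectrum ℝ (Matrix.toEuclideanLin A) := by
      rw [Matrix.spectrum_toEuclideanLin (𝕜 := ℝ)]
      exact hμ
    have hev : Module.End.HasEigenvalue (Matrix.toEuclideanLin A) μ :=
      Module.End.hasEigenvalue_iff_mem_spectrum.mpr hμ'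
    obtain ⟨x, hx⟩ := hev.exists_hasEigenvector
    have hx1 : A *ᵥ ⇑x = μ • ⇑x := by
      have h := hx.apply_eq_smul
      exact congrArg (WithLp.equiv 2 (V → ℝ)) h
    obtain ⟨v, hv⟩ : ∃ v, x v ≠ 0 := by
      by_contra h
      push_neg at h
      exact hx.right (PiLp.ext h)
    have hxx : (0:ℝ) < ⇑x ⬝ᵥ ⇑x :=
      Finset.sum_pos' (fun i _ => mul_self_nonneg _)
        ⟨v, Finset.mem_univ v, mul_self_pos.mpr hv⟩
    have h := hray ⇑x
    rw [hx1, dotProduct_smul, smul_eq_mul] at h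
    exact le_of_mul_le_mul_right h hxx
  have hmem : lm ∈ spectrum ℝ A := hA.eigenvalues_mem_spectrum_real i0
  have hsup : sSup (spectrum ℝ A) = lm :=
    le_antisymm (csSup_le ⟨lm, hmem⟩ hub) (le_csSup ⟨lm, hub⟩ hmem)
  -- the sum over neighbors is matrix-vector multiplication
  have hsum : ∀ (f : V → ℝ) v, ∑ w ∈ G.neighborFinset v, f w = (A *ᵥ f) v :=
    fun f v => (SimpleGraph.adjMatrix_mulVec_apply G v f).symm
  -- lower bound on the ratio functional
  have hlb : ∀ μ : {f : V → ℝ // ∀ v, 0 < f v},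
      1 + lm ≤ ⨆ v : V, (μ.1 v + ∑ w ∈ G.neighborFinset v, μ.1 w) / μ.1 v := by
    intro μ
    set c := ⨆ v : V, (μ.1 v + ∑ w ∈ G.neighborFinset v, μ.1 w) / μ.1 v with hcdef
    have hbdd : BddAbove (Set.range fun v : V =>
        (μ.1 v + ∑ w ∈ G.neighborFinset v, μ.1 w) / μ.1 v) :=
      Set.Finite.bddAbove (Set.finite_range _)
    have hAμ : ∀ v, (A *ᵥ μ.1) v ≤ (c - 1) * μ.1 v := by
      intro v
      have h1 : (μ.1 v + ∑ w ∈ G.neighborFinset v, μ.1 w) / μ.1 v ≤ c := le_ciSup hbdd v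
      rw [div_le_iff₀ (μ.2 v), hsum] at h1
      nlinarith [μ.2 v]
    have hyμ : (0:ℝ) < y ⬝ᵥ μ.1 :=
      Finset.sum_pos (fun v _ => mul_pos (hypos v) (μ.2 v)) Finset.univ_nonempty
    have hkey : lm * (y ⬝ᵥ μ.1) ≤ (c - 1) * (y ⬝ᵥ μ.1) := by
      have e1 : lm * (y ⬝ᵥ μ.1) = y ⬝ᵥ (A *ᵥ μ.1) := by
        rw [Matrix.dotProduct_mulVec, ← Matrix.mulVec_transpose]
        have : Aᵀ = A := SimpleGraph.transpose_adjMatrix G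
        rw [this, hAy, smul_dotProduct, smul_eq_mul]
      rw [e1]
      calc y ⬝ᵥ (A *ᵥ μ.1) ≤ ∑ v, y v * ((c - 1) * μ.1 v) :=
            Finset.sum_le_sum fun v _ => mul_le_mul_of_nonneg_left (hAμ v) (hynn v)
        _ = (c - 1) * (y ⬝ᵥ μ.1) := by
            rw [dotProduct, Finset.mul_sum]
            exact Finset.sum_congr rfl fun v _ => by ring
    have : lm ≤ c - 1 := le_of_mul_le_mul_right hkey hyμ
    linarith
  -- value at the Perron vector
  have hval : (⨆ v : V, (y v + ∑ w ∈ G.neighborFinset v, y w) / y v) = 1 + lm := by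
    have h : ∀ v, (y v + ∑ w ∈ G.neighborFinset v, y w) / y v = 1 + lm := by
      intro v
      rw [hsum, hAy]
      rw [Pi.smul_apply, smul_eq_mul, div_eq_iff (hypos v).ne']
      ring
    simp only [h]
    exact ciSup_const
  haveI : Nonempty {f : V → ℝ // ∀ v, 0 < f v} := ⟨⟨fun _ => 1, fun _ => one_pos⟩⟩
  rw [hsup]
  refine le_antisymm ?_ (le_ciInf hlb)
  refine ciInf_le_of_le ⟨1 + lm, ?_⟩ ⟨y, hypos⟩ (le_of_eq hval)
  rintro z ⟨μ, rfl⟩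
  exact hlb μ
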